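/- Let k be a field and φ an exponential map on an affine k-domain R admitting a slice: an element s ∈ R with φ(s) = s − W (or s + W). Then R = R^φ[s] and s is transcendental over R^φ, so R ≅ (R^φ)^{[1]} as R^φ-algebras. -/
import Mathlib


open Polynomial

/-- An exponential map on a commutative ring `R`. -/
def IsExpMap {R : Type*} [CommRing R] (φ : R →+* Polynomial R) : Prop :=
  (∀ a : R, (φ a).eval 0 = a) ∧
  (∀ a : R, (φ a).map φ =
    (φ a).eval₂ ((Polynomial.C : Polynomial R →+* Polynomial (Polynomial R)).comp Polynomial.C)
      (Polynomial.X + Polynomial.C Polynomial.X))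

lemma coeff_comp_neg_X {R : Type*} [CommRing R] (p : Polynomial R) (i : ℕ) :
    (p.comp (-X : Polynomial R)).coeff i = (-1) ^ i * p.coeff i := by
  induction p using Polynomial.induction_on' with
  | add p q hp hq => simp [add_comp, hp, hq, mul_add]
  | monomial n a =>
    have h : (monomial n a).comp (-X : Polynomial R) = monomial n ((-1) ^ n * a) := by
      rw [← C_mul_X_pow_eq_monomial, ← C_mul_X_pow_eq_monomial, mul_comp, C_comp, pow_comp,
        X_comp, neg_pow, map_mul, map_pow, map_neg, map_one]
      ring
    rw [h, coeff_monomial, coeff_monomial]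
    rcases eq_or_ne n i with rfl | hni
    · simp
    · simp [hni]

/-- Key lemma: if `φ t = C t - X` then every `a` is a polynomial in `-t` with
invariant coefficients. -/
lemma slice_key {R : Type*} [CommRing R] (φ : R →+* Polynomial R) (hφ : IsExpMap φ)
    (t : R) (ht : φ t = C t - X) :
    ∀ a : R, ∃ p : Polynomial R,
      (∀ i : ℕ, φ (p.coeff i) = C (p.coeff i)) ∧ p.eval (-t) = a := by
  obtain ⟨hcounit, hco⟩ := hφ
  set π : R →+* R := (evalRingHom t).comp φ with hπ
  have hπ_apply : ∀ b : R, π b = (φ b).eval t := fun b => rfl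
  have hinv : ∀ b : R, φ (π b) = C (π b) := by
    intro b
    have h1 : φ (π b) = ((φ b).map φ).eval (C t - X) := by
      rw [hπ_apply, eval_map]
      have h := hom_eval₂ (φ b) (RingHom.id R) φ t
      rw [RingHom.comp_id, ht] at h
      exact h
    have h2 : ((φ b).eval₂ ((C : Polynomial R →+* Polynomial (Polynomial R)).comp C)
        (X + C X)).eval (C t - X) = C (π b) := by
      have := hom_eval₂ (φ b) ((C : Polynomial R →+* Polynomial (Polynomial R)).comp C)
        (evalRingHom (C t - X)) (X + C X)
      rw [coe_evalRingHom] at this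
      rw [this]
      have hc : (evalRingHom (C t - X : Polynomial R)).comp
          ((C : Polynomial R →+* Polynomial (Polynomial R)).comp C) = (C : R →+* Polynomial R) := by
        ext r
        simp
      have hx : ((X : Polynomial (Polynomial R)) + C X).eval (C t - X) = C t := by
        simp
      rw [hc, hx]
      show (φ b).comp (C t) = C (π b)
      rw [comp_C, hπ_apply]
    rw [h1, hco b, h2]
  intro a
  refine ⟨(φ a).map π, ?_, ?_⟩
  · intro i
    rw [coeff_map]
    exact hinv _
  · have key : (φ a).map π = (φ a).comp (X + C t) := by
      have h := congrArg (Polynomial.map (evalRingHom t)) (hco a)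
      rw [map_map] at h
      have h2 : ((φ a).eval₂ ((C : Polynomial R →+* Polynomial (Polynomial R)).comp C)
          (X + C X)).map (evalRingHom t) = (φ a).comp (X + C t) := by
        have := hom_eval₂ (φ a) ((C : Polynomial R →+* Polynomial (Polynomial R)).comp C)
          (mapRingHom (evalRingHom t)) (X + C X)
        rw [coe_mapRingHom] at this
        rw [this]
        have hc : (mapRingHom (evalRingHom t)).comp
            ((C : Polynomial R →+* Polynomial (Polynomial R)).comp C)
            = (C : R →+* Polynomial R) := by
          ext r
          simp
        have hx : ((X : Polynomial (Polynomial R)) + C X).map (evalRingHom t) = X + C t := by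
          simp
        rw [hc, hx]
        rfl
      rw [h2] at h
      exact h
    rw [key, eval_comp]
    simp [hcounit a]

/-- Slice theorem: if an exponential map `φ` on an affine `k`-domain `R` has a
slice `s` (i.e. `φ(s) = s ∓ W`), then `R = R^φ[s]` with `s` transcendental over the
invariant ring `R^φ`, so `R ≅ (R^φ)^{[1]}`. -/
theorem stmt14 {k R : Type*} [Field k] [CommRing R] [IsDomain R] [Algebra k R]
    [Algebra.FiniteType k R]
    (φ : R →ₐ[k] Polynomial R) (hφ : IsExpMap φ.toRingHom)
    (s : R) (hs : φ s = Polynomial.C s - Polynomial.X ∨ φ s = Polynomial.C s + Polynomial.X) :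
    (∀ a : R, ∃ p : Polynomial R,
        (∀ i : ℕ, φ (p.coeff i) = Polynomial.C (p.coeff i)) ∧ p.eval s = a) ∧
    (∀ p : Polynomial R,
        (∀ i : ℕ, φ (p.coeff i) = Polynomial.C (p.coeff i)) → p.eval s = 0 → p = 0) := by
  constructor
  · intro a
    rcases hs with h | h
    · -- φ s = C s - X : take t = s, then compose with -X
      obtain ⟨p, hpc, hpe⟩ := slice_key φ.toRingHom hφ s h a
      refine ⟨p.comp (-X), ?_, ?_⟩
      · intro i
        show φ.toRingHom ((p.comp (-X)).coeff i) = C ((p.comp (-X)).coeff i)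
        rw [coeff_comp_neg_X, map_mul, map_pow, map_neg, map_one, map_mul, map_pow,
          map_neg, map_one, hpc i]
      · rw [eval_comp]
        simpa using hpe
    · -- φ s = C s + X : take t = -s
      have ht : φ.toRingHom (-s) = C (-s) - X := by
        rw [map_neg]
        show -(φ s) = C (-s) - X
        rw [h, map_neg]
        ring
      obtain ⟨p, hpc, hpe⟩ := slice_key φ.toRingHom hφ (-s) ht a
      exact ⟨p, hpc, by simpa using hpe⟩
  · intro p hpc hpe
    have h0 : p.comp (φ s) = 0 := by
      have h1 : φ.toRingHom (p.eval s) = p.comp (φ.toRingHom s) := by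
        have h := hom_eval₂ p (RingHom.id R) φ.toRingHom s
        rw [RingHom.comp_id] at h
        have hmap : p.map φ.toRingHom = p.map (C : R →+* Polynomial R) := by
          ext n
          rw [coeff_map, coeff_map, show (φ.toRingHom (p.coeff n)) = C (p.coeff n) from hpc n]
        have h2 : φ.toRingHom (p.eval s) = eval₂ φ.toRingHom (φ.toRingHom s) p := h
        rw [h2, ← eval_map, hmap, eval_map]
        rfl
      have : φ.toRingHom (p.eval s) = 0 := by rw [hpe, map_zero]
      rw [h1] at this
      exact this
    rcases hs with h | h
    · have hinv : ((C s - X : Polynomial R)).comp (C s - X) = X := by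
        simp
      calc p = p.comp X := by rw [comp_X]
        _ = (p.comp (C s - X)).comp (C s - X) := by rw [comp_assoc, hinv]
        _ = 0 := by rw [← h, h0, zero_comp]
    · have hinv : ((C s + X : Polynomial R)).comp (X - C s) = X := by
        simp
      calc p = p.comp X := by rw [comp_X]
        _ = (p.comp (C s + X)).comp (X - C s) := by rw [comp_assoc, hinv]
        _ = 0 := by rw [← h, h0, zero_comp]
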